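/- Let n ≥ 1 be an integer, let A be an n×n real symmetric matrix, let t > 0 be a real number and let v ∈ ℝⁿ with v ≠ 0. Then equality ((t+n)/(t+n−1))·‖A·v‖² = ‖v‖²·( ‖A‖_HS² + (tr A)²/t ) holds if and only if there exist a real number α and a unit vector e ∈ ℝⁿ such that A = α·(Iₙ − (t+n)·e·eᵀ) (i.e. A_{ij} = α(δ_{ij} − (t+n)e_i e_j) for all i,j) and v is a scalar multiple of e. -/

import Mathlib

def kd {n : ℕ} (i j : Fin n) : ℝ := if i = j then 1 else 0

lemma kd_sum_diag (n : ℕ) : (∑ i : Fin n, ∑ j : Fin n, kd i j) = n := by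
  simp [kd, Finset.sum_ite_eq]

lemma kd_sum_mul {n : ℕ} (g : Fin n → ℝ) (i : Fin n) : (∑ j : Fin n, kd i j * g j) = g i := by
  simp [kd, Finset.sum_ite_eq]

set_option maxHeartbeats 1000000 in
/-- Equality case of the finite-dimensional core of the generalized refined Kato
inequality: for a symmetric `A`, `t > 0` and `v ≠ 0`, equality holds if and only if
`A = α (Id - (t+n) e ⊗ e)` for some `α ∈ ℝ` and some unit vector `e`, and `v` is a
scalar multiple of `e`. -/
theorem kato_matrix_equality (n : ℕ) (hn : 1 ≤ n)
    (A : Matrix (Fin n) (Fin n) ℝ) (hA : A.IsSymm)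
    (t : ℝ) (ht : 0 < t) (v : Fin n → ℝ) (hv : v ≠ 0) :
    ((t + n) / (t + n - 1)) * (∑ i, (A.mulVec v i) ^ 2) =
      (∑ i, (v i) ^ 2) * ((∑ i, ∑ j, (A i j) ^ 2) + (∑ i, A i i) ^ 2 / t) ↔
    ∃ (α : ℝ) (e : Fin n → ℝ), (∑ i, (e i) ^ 2) = 1 ∧
      A = α • ((1 : Matrix (Fin n) (Fin n) ℝ) - (t + n) • Matrix.vecMulVec e e) ∧
      ∃ c : ℝ, v = c • e := by
  constructor
  · intro hEq
    rcases eq_or_lt_of_le hn with h1 | h2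
    · -- n = 1
      subst h1
      have hv0 : v 0 ≠ 0 := by
        intro h; apply hv; funext i; rw [Fin.eq_zero i]; exact h
      have hV : (0:ℝ) < v 0 ^ 2 := by positivity
      set s := Real.sqrt (v 0 ^ 2) with hs
      have hsne : s ≠ 0 := Real.sqrt_ne_zero'.mpr hV
      have hsq : s ^ 2 = v 0 ^ 2 := Real.sq_sqrt hV.le
      refine ⟨-(A 0 0)/t, fun i => v i / s, ?_, ?_, s, ?_⟩
      · rw [Fin.sum_univ_one, div_pow, hsq, div_self hV.ne']
      · ext i j
        rw [Fin.eq_zero i, Fin.eq_zero j]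
        have : v 0 / s * (v 0 / s) = 1 := by
          rw [div_mul_div_comm, ← sq, ← sq, hsq, div_self hV.ne']
        simp [Matrix.one_apply, Matrix.vecMulVec_apply, this]
        field_simp
      · funext i
        rw [Fin.eq_zero i]
        simp only [Pi.smul_apply, smul_eq_mul]
        field_simp
    · -- 2 ≤ n
      have hn2 : 2 ≤ n := h2
      have hs : ∀ i j, A j i = A i j := hA.apply
      have hnn : (2:ℝ) ≤ (n:ℝ) := by exact_mod_cast hn2
      obtain ⟨i0, hi0⟩ := Function.ne_iff.mp hv
      obtain ⟨V, hV⟩ : ∃ x : ℝ, x = ∑ i, (v i)^2 := ⟨_, rfl⟩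
      obtain ⟨P, hP⟩ : ∃ x : ℝ, x = ∑ i, (A.mulVec v i)^2 := ⟨_, rfl⟩
      obtain ⟨N, hN⟩ : ∃ x : ℝ, x = ∑ i, ∑ j, (A i j)^2 := ⟨_, rfl⟩
      obtain ⟨T, hT⟩ : ∃ x : ℝ, x = ∑ i, A i i := ⟨_, rfl⟩
      obtain ⟨L, hL⟩ : ∃ x : ℝ, x = ∑ i, v i * A.mulVec v i := ⟨_, rfl⟩
      have hVpos : 0 < V := by
        rw [hV]
        exact Finset.sum_pos' (fun j _ => sq_nonneg _)
          ⟨i0, Finset.mem_univ i0, (pow_pos (abs_pos.mpr hi0) 2).trans_eq (sq_abs _)⟩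
      have hV0 : V ≠ 0 := hVpos.ne'
      obtain ⟨lam, hlam⟩ : ∃ x : ℝ, x = L / V := ⟨_, rfl⟩
      obtain ⟨mu, hmu⟩ : ∃ x : ℝ, x = (T - lam) / ((n:ℝ) - 1) := ⟨_, rfl⟩
      obtain ⟨gam, hgam⟩ : ∃ x : ℝ, x = (lam - mu) / V := ⟨_, rfl⟩
      obtain ⟨b, hb⟩ : ∃ b' : Fin n → ℝ, b' = fun i => A.mulVec v i - lam * v i := ⟨_, rfl⟩
      have hbi : ∀ i, b i = A.mulVec v i - lam * v i := fun i => by rw [hb]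
      have hlamV : lam * V = L := by rw [hlam]; field_simp
      -- basic sums
      have hvv : ∑ i, v i * v i = V := by
        rw [hV]; exact Finset.sum_congr rfl fun i _ => (sq (v i)).symm
      have hvb : ∑ i, v i * b i = 0 := by
        have : ∀ i, v i * b i = v i * A.mulVec v i - lam * (v i * v i) := fun i => by
          rw [hbi]; ring
        rw [Finset.sum_congr rfl fun i _ => this i, Finset.sum_sub_distrib, ← Finset.mul_sum,
          hvv, hlamV, ← hL, sub_self]
      have hbA : ∑ i, b i * A.mulVec v i = P - lam * L := by
        have : ∀ i, b i * A.mulVec v i = (A.mulVec v i)^2 - lam * (v i * A.mulVec v i) :=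
          fun i => by rw [hbi]; ring
        rw [Finset.sum_congr rfl fun i _ => this i, Finset.sum_sub_distrib, ← Finset.mul_sum,
          ← hP, ← hL]
      have hbb : ∑ i, b i * b i = P - lam * L := by
        have : ∀ i, b i * b i = (A.mulVec v i)^2 - 2 * lam * (v i * A.mulVec v i)
            + lam * (lam * (v i * v i)) := fun i => by rw [hbi]; ring
        rw [Finset.sum_congr rfl fun i _ => this i]
        simp only [Finset.sum_add_distrib, Finset.sum_sub_distrib, ← Finset.mul_sum]
        rw [hvv, hlamV, ← hP, ← hL]; ring
      -- double sums involving A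
      have hAvv : ∑ i, ∑ j, A i j * (v i * v j) = L := by
        have inner : ∀ i, ∑ j, A i j * (v i * v j) = v i * A.mulVec v i := by
          intro i
          rw [show A.mulVec v i = ∑ j, A i j * v j from rfl, Finset.mul_sum]
          exact Finset.sum_congr rfl fun j _ => by ring
        rw [Finset.sum_congr rfl fun i _ => inner i, ← hL]
      have hAvb : ∑ i, ∑ j, A i j * (v i * b j) = P - lam * L := by
        rw [Finset.sum_comm]
        have inner : ∀ j, ∑ i, A i j * (v i * b j) = b j * A.mulVec v j := by
          intro j
          rw [show A.mulVec v j = ∑ i, A j i * v i from rfl, Finset.mul_sum]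
          exact Finset.sum_congr rfl fun i _ => by rw [← hs i j]; ring
        rw [Finset.sum_congr rfl fun j _ => inner j, hbA]
      have hAbv : ∑ i, ∑ j, A i j * (b i * v j) = P - lam * L := by
        have inner : ∀ i, ∑ j, A i j * (b i * v j) = b i * A.mulVec v i := by
          intro i
          rw [show A.mulVec v i = ∑ j, A i j * v j from rfl, Finset.mul_sum]
          exact Finset.sum_congr rfl fun j _ => by ring
        rw [Finset.sum_congr rfl fun i _ => inner i, hbA]
      have hAd : ∑ i, ∑ j, A i j * kd i j = T := by
        have inner : ∀ i, ∑ j, A i j * kd i j = A i i := by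
          intro i
          rw [show (∑ j, A i j * kd i j) = ∑ j, kd i j * A i j from
            Finset.sum_congr rfl fun j _ => by ring]
          exact kd_sum_mul (fun j => A i j) i
        rw [Finset.sum_congr rfl fun i _ => inner i, ← hT]
      have hdvv : ∑ i, ∑ j, kd i j * (v i * v j) = V := by
        have inner : ∀ i, ∑ j, kd i j * (v i * v j) = v i * v i :=
          fun i => kd_sum_mul (fun j => v i * v j) i
        rw [Finset.sum_congr rfl fun i _ => inner i, hvv]
      have hdvb : ∑ i, ∑ j, kd i j * (v i * b j) = 0 := by
        have inner : ∀ i, ∑ j, kd i j * (v i * b j) = v i * b i :=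
          fun i => kd_sum_mul (fun j => v i * b j) i
        rw [Finset.sum_congr rfl fun i _ => inner i, hvb]
      have hdbv : ∑ i, ∑ j, kd i j * (b i * v j) = 0 := by
        have inner : ∀ i, ∑ j, kd i j * (b i * v j) = b i * v i :=
          fun i => kd_sum_mul (fun j => b i * v j) i
        rw [Finset.sum_congr rfl fun i _ => inner i, ← hvb]
        exact Finset.sum_congr rfl fun i _ => by ring
      have hAA : ∑ i, ∑ j, A i j * A i j = N := by
        rw [hN]
        exact Finset.sum_congr rfl fun i _ => Finset.sum_congr rfl fun j _ => (sq (A i j)).symm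
      -- pointwise expansion of the remainder matrix
      have key : ∀ i j, (A i j - mu * kd i j - gam * (v i * v j) - (v i * b j + b i * v j)/V)^2
          = A i j * A i j
          + mu^2 * kd i j
          + gam^2 * ((v i * v i) * (v j * v j))
          + (1/(V*V)) * ((v i * v i) * (b j * b j))
          + (2/(V*V)) * ((v i * b i) * (v j * b j))
          + (1/(V*V)) * ((b i * b i) * (v j * v j))
          - 2*mu * (A i j * kd i j)
          - 2*gam * (A i j * (v i * v j))
          - (2/V) * (A i j * (v i * b j))
          - (2/V) * (A i j * (b i * v j))
          + (2*mu*gam) * (kd i j * (v i * v j))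
          + (2*mu/V) * (kd i j * (v i * b j))
          + (2*mu/V) * (kd i j * (b i * v j))
          + (2*gam/V) * ((v i * v i) * (v j * b j))
          + (2*gam/V) * ((v i * b i) * (v j * v j)) := by
        intro i j
        have hk : kd i j * kd i j = kd i j := by by_cases h : i = j <;> simp [kd, h]
        linear_combination (mu^2) * hk
      have hSD : ∑ i, ∑ j, (A i j - mu * kd i j - gam * (v i * v j) - (v i * b j + b i * v j)/V)^2
          = N + mu^2*(n:ℝ) + gam^2*(V*V) - 2*mu*T - 2*gam*L + 2*mu*gam*V - 2*(P - lam*L)/V := by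
        rw [Finset.sum_congr rfl fun i _ => Finset.sum_congr rfl fun j _ => key i j]
        simp only [Finset.sum_add_distrib, Finset.sum_sub_distrib, ← Finset.mul_sum,
          ← Finset.sum_mul]
        rw [hAA, kd_sum_diag, hAvv, hAvb, hAbv, hAd, hdvv, hdvb, hdbv, hvv, hvb, hbb]
        field_simp
        ring
      -- the equality hypothesis in named variables
      rw [← hP, ← hV, ← hN, ← hT] at hEq
      have ht0 : t ≠ 0 := ht.ne'
      have hden : (0:ℝ) < t + (n:ℝ) - 1 := by linarith
      have hn1 : (n:ℝ) - 1 ≠ 0 := by linarith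
      -- division-free relations
      have eL : L = lam * V := hlamV.symm
      have eT : T = mu * ((n:ℝ)-1) + lam := by rw [hmu]; field_simp; ring
      have emu : mu = lam - gam * V := by rw [hgam]; field_simp; ring
      have hkey0 : (t+(n:ℝ)-1)*(N + T^2/t) - (t+(n:ℝ))*(P/V)
          = (t+(n:ℝ)-2)*((P - lam*L)/V)
          + (t+(n:ℝ)-1)*(N + mu^2*(n:ℝ) + gam^2*(V*V) - 2*mu*T - 2*gam*L + 2*mu*gam*V - 2*(P - lam*L)/V)
          + ((n:ℝ)-1)*(lam + (t+(n:ℝ)-1)*mu)^2/t := by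
        rw [eT, emu, eL]
        field_simp
        ring
      have h1 : ((t+(n:ℝ)-1)*(N + T^2/t)) * V = (t+(n:ℝ))*P := by
        rw [div_mul_eq_mul_div, div_eq_iff hden.ne'] at hEq
        linear_combination -hEq
      have h2 : (t+(n:ℝ)-1)*(N + T^2/t) - (t+(n:ℝ))*(P/V) = 0 := by
        rw [sub_eq_zero, ← mul_div_assoc, eq_div_iff hV0]; exact h1
      -- three nonnegative terms summing to zero
      have hBbnn : 0 ≤ P - lam * L := by
        rw [← hbb]; exact Finset.sum_nonneg fun i _ => mul_self_nonneg _
      have hSDnn : 0 ≤ N + mu^2*(n:ℝ) + gam^2*(V*V) - 2*mu*T - 2*gam*L + 2*mu*gam*V - 2*(P - lam*L)/V := by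
        rw [← hSD]
        exact Finset.sum_nonneg fun i _ => Finset.sum_nonneg fun j _ => sq_nonneg _
      have hsum0 : (t+(n:ℝ)-2)*((P - lam*L)/V)
          + (t+(n:ℝ)-1)*(N + mu^2*(n:ℝ) + gam^2*(V*V) - 2*mu*T - 2*gam*L + 2*mu*gam*V - 2*(P - lam*L)/V)
          + ((n:ℝ)-1)*(lam + (t+(n:ℝ)-1)*mu)^2/t = 0 := by
        rw [← hkey0]; exact h2
      have hc1 : (0:ℝ) < t + (n:ℝ) - 2 := by linarith
      have ha1 : 0 ≤ (t+(n:ℝ)-2)*((P - lam*L)/V) := by positivity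
      have ha2 : 0 ≤ (t+(n:ℝ)-1)*(N + mu^2*(n:ℝ) + gam^2*(V*V) - 2*mu*T - 2*gam*L + 2*mu*gam*V - 2*(P - lam*L)/V) := by
        exact mul_nonneg hden.le hSDnn
      have ha3 : 0 ≤ ((n:ℝ)-1)*(lam + (t+(n:ℝ)-1)*mu)^2/t :=
        div_nonneg (mul_nonneg (by linarith) (sq_nonneg _)) ht.le
      have hz1 : P - lam * L = 0 := by
        have h : (t+(n:ℝ)-2)*((P - lam*L)/V) = 0 := by linarith
        rcases mul_eq_zero.mp h with h' | h'
        · linarith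
        · rcases div_eq_zero_iff.mp h' with h'' | h''
          · exact h''
          · exact absurd h'' hV0
      have hz2 : N + mu^2*(n:ℝ) + gam^2*(V*V) - 2*mu*T - 2*gam*L + 2*mu*gam*V - 2*(P - lam*L)/V = 0 := by
        have h : (t+(n:ℝ)-1)*(N + mu^2*(n:ℝ) + gam^2*(V*V) - 2*mu*T - 2*gam*L + 2*mu*gam*V - 2*(P - lam*L)/V) = 0 := by
          linarith
        rcases mul_eq_zero.mp h with h' | h'
        · linarith
        · exact h'
      have hz3 : lam + (t+(n:ℝ)-1)*mu = 0 := by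
        have h : ((n:ℝ)-1)*(lam + (t+(n:ℝ)-1)*mu)^2/t = 0 := by linarith
        rcases div_eq_zero_iff.mp h with h' | h'
        · rcases mul_eq_zero.mp h' with h'' | h''
          · exact absurd h'' hn1
          · exact pow_eq_zero_iff (by norm_num) |>.mp h''
        · exact absurd h' ht0
      -- b = 0
      have hb0 : ∀ i, b i = 0 := by
        have hsum : ∑ i, b i * b i = 0 := by rw [hbb, hz1]
        intro i
        have := (Finset.sum_eq_zero_iff_of_nonneg (fun j _ => mul_self_nonneg (b j))).mp hsum i
          (Finset.mem_univ i)
        exact mul_self_eq_zero.mp this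
      -- D = 0
      have hD0 : ∀ i j, A i j = mu * kd i j + gam * (v i * v j) := by
        have hsum : ∑ i, ∑ j, (A i j - mu * kd i j - gam * (v i * v j) - (v i * b j + b i * v j)/V)^2 = 0 := by
          rw [hSD, hz2]
        intro i j
        have h1 := (Finset.sum_eq_zero_iff_of_nonneg
          (fun i _ => Finset.sum_nonneg fun j _ => sq_nonneg _)).mp hsum i (Finset.mem_univ i)
        have h2 := (Finset.sum_eq_zero_iff_of_nonneg (fun j _ => sq_nonneg _)).mp h1 j
          (Finset.mem_univ j)
        have h3 := pow_eq_zero_iff (two_ne_zero) |>.mp h2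
        have h4 : A i j - mu * kd i j - gam * (v i * v j) = 0 := by
          rw [hb0 i, hb0 j] at h3
          simpa using h3
        linarith
      -- the eigen relation
      have hgamval : gam * V = -(t+(n:ℝ)) * mu := by
        rw [hgam]; field_simp; linarith [hz3]
      -- construct the answer
      refine ⟨mu, fun i => v i / Real.sqrt V, ?_, ?_, Real.sqrt V, ?_⟩
      · have hsq : Real.sqrt V ^ 2 = V := Real.sq_sqrt hVpos.le
        have : ∀ i, (v i / Real.sqrt V)^2 = (v i)^2 * (1/V) := by
          intro i; rw [div_pow, hsq]; ring
        rw [Finset.sum_congr rfl fun i _ => this i, ← Finset.sum_mul, ← hV]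
        field_simp
      · ext i j
        have hsq : Real.sqrt V * Real.sqrt V = V := Real.mul_self_sqrt hVpos.le
        have entry : (mu • ((1 : Matrix (Fin n) (Fin n) ℝ) - (t + n) • Matrix.vecMulVec
            (fun i => v i / Real.sqrt V) (fun i => v i / Real.sqrt V))) i j
            = mu * kd i j - (t+(n:ℝ)) * mu * (v i * v j) / V := by
          by_cases h : i = j <;>
            simp [Matrix.one_apply, Matrix.vecMulVec_apply, kd, h] <;>
            · rw [div_mul_div_comm, hsq]; ring
        rw [entry, hD0 i j]
        have : gam * (v i * v j) = -(t+(n:ℝ)) * mu * (v i * v j) / V := by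
          rw [← hgamval]; field_simp
        rw [this]; ring
      · funext i
        have hsqne : Real.sqrt V ≠ 0 := Real.sqrt_ne_zero'.mpr hVpos
        simp only [Pi.smul_apply, smul_eq_mul]
        field_simp
  · rintro ⟨α, e, he, hAe, c, rfl⟩
    have hn1 : (1:ℝ) ≤ (n:ℝ) := by exact_mod_cast hn
    have htn1 : t + n - 1 ≠ 0 := by nlinarith
    have hApp : ∀ i j, A i j = α * kd i j - α * (t + n) * (e i * e j) := by
      intro i j; rw [hAe]; by_cases h : i = j <;>
        simp [Matrix.one_apply, Matrix.vecMulVec_apply, kd, h] <;> ring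
    have hmv : ∀ i, A.mulVec (c • e) i = α * c * (1 - (t + n)) * e i := by
      intro i
      have h1 : ∀ j, A i j * (c • e) j
          = (α * c) * (kd i j * e j) - (α * c * (t + n) * e i) * (e j * e j) := by
        intro j; rw [hApp]; simp; ring
      rw [show A.mulVec (c • e) i = ∑ j, A i j * (c • e) j from rfl]
      simp only [h1, Finset.sum_sub_distrib, ← Finset.mul_sum]
      rw [kd_sum_mul e i]
      have he' : ∑ j, e j * e j = 1 := by
        rw [← he]; exact Finset.sum_congr rfl fun j _ => by ring
      rw [he']; ring
    have h1 : ∑ i, (A.mulVec (c • e) i)^2 = (α * c * (1 - (t+n)))^2 := by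
      simp only [hmv]
      have : ∀ i, (α * c * (1 - (t + n)) * e i)^2 = (α * c * (1-(t+n)))^2 * (e i)^2 :=
        fun i => by ring
      simp only [this, ← Finset.mul_sum, he, mul_one]
    have h2 : ∑ i, ((c • e) i)^2 = c^2 := by
      have : ∀ i, ((c • e) i)^2 = c^2 * (e i)^2 := fun i => by simp [mul_pow]
      simp only [this, ← Finset.mul_sum, he, mul_one]
    have h3 : ∑ i, ∑ j, (A i j)^2 = α^2 * ((n:ℝ) - 2*(t+n) + (t+n)^2) := by
      have key : ∀ i j, (A i j)^2 = α^2 * kd i j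
          - (2*α^2*(t+n)*e i) * (kd i j * e j) + (α^2*(t+n)^2) * ((e i)^2 * (e j)^2) := by
        intro i j; rw [hApp]
        have : kd i j * kd i j = kd i j := by by_cases h : i = j <;> simp [kd, h]
        have h2 : kd i j * (e i * e j) = kd i j * (e j * e j) := by
          by_cases h : i = j <;> simp [kd, h]
        nlinarith [this, h2] 
      simp only [key, Finset.sum_add_distrib, Finset.sum_sub_distrib, ← Finset.mul_sum,
        ← Finset.sum_mul, kd_sum_mul]
      rw [kd_sum_diag]
      have : ∑ i, e i * e i = 1 := by rw [← he]; exact Finset.sum_congr rfl fun j _ => by ring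
      have h4 : ∑ i, (2*α^2*(t+n)*e i) * e i = 2*α^2*(t+n) := by
        have : ∀ i, (2*α^2*(t+n)*e i) * e i = (2*α^2*(t+n)) * (e i)^2 := fun i => by ring
        simp only [this, ← Finset.mul_sum, he, mul_one]
      rw [h4]
      rw [he]; ring
    have h4 : ∑ i, A i i = -α * t := by
      have key : ∀ i, A i i = α - (α*(t+n)) * (e i * e i) := by
        intro i; rw [hApp]; simp [kd]
      simp only [key, Finset.sum_sub_distrib, ← Finset.mul_sum]
      have : ∑ i, e i * e i = 1 := by rw [← he]; exact Finset.sum_congr rfl fun j _ => by ring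
      rw [this]; simp; ring
    rw [h1, h2, h3, h4]
    field_simp
    ring
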